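/- Let N be a free abelian group of finite rank with a norm ‖·‖ on N ⊗ ℝ and Z : N → ℂ a group homomorphism. If a stability condition (Z, P) satisfies the support property, i.e. there is C > 0 with ‖E‖/|Z(E)| ≤ C for all semistable E, then the heart P(φ) of each phase is a finite length abelian category (noetherian and artinian). -/

import Mathlib

open CategoryTheory CategoryTheory.Limits

section Aux

variable {P : Type*} [Category P] [Abelian P]

/-- The short exact sequence attached to a mono. -/
lemma shortExact_of_mono {X Y : P} (f : X ⟶ Y) [Mono f] :
    (ShortComplex.mk f (cokernel.π f) (cokernel.condition f)).ShortExact where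
  exact := ShortComplex.exact_of_g_is_cokernel _ (cokernelIsCokernel f)
  mono_f := inferInstance
  epi_g := by dsimp; infer_instance

end Aux

theorem stmt_11 {V : Type*} [NormedAddCommGroup V] [NormedSpace ℝ V]
    [FiniteDimensional ℝ V]
    (N : AddSubgroup V) [DiscreteTopology N]
    {P : Type*} [Category P] [Abelian P]
    (v : P → N) (Z : N →+ ℂ) (φ : ℝ)
    (hadd : ∀ S : ShortComplex P, S.ShortExact → v S.X₂ = v S.X₁ + v S.X₃)
    (hZ : ∀ E : P, ¬ IsZero E →
      ∃ r : ℝ, 0 < r ∧ Z (v E) = r * Complex.exp (Real.pi * φ * Complex.I))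
    (hsupp : ∃ C : ℝ, 0 < C ∧ ∀ E : P, ¬ IsZero E →
      ‖(v E : V)‖ ≤ C * ‖Z (v E)‖) :
    ∀ E : P, WellFoundedGT (Subobject E) ∧ WellFoundedLT (Subobject E) := by
  classical
  obtain ⟨C, hC, hsupp⟩ := hsupp
  -- the "mass" function
  set e : ℂ := Complex.exp (-(Real.pi * φ * Complex.I)) with he
  set f : P → ℝ := fun X => (Z (v X) * e).re with hf
  -- the class of a zero object is 0
  have hv0 : ∀ X : P, IsZero X → v X = 0 := by
    intro X hX
    have hS : (ShortComplex.mk (𝟙 X) (𝟙 X) (by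
        rw [Category.comp_id]; exact hX.eq_of_src _ _)).ShortExact := by
      refine ⟨ShortComplex.exact_of_isZero_X₂ _ hX⟩
    have := hadd _ hS
    simpa using this.symm
  -- `f` is positive on nonzero objects
  have hfpos : ∀ X : P, ¬ IsZero X → 0 < f X := by
    intro X hX
    obtain ⟨r, hr, hZr⟩ := hZ X hX
    have : Z (v X) * e = (r : ℂ) := by
      rw [hZr, he, mul_assoc, ← Complex.exp_add, add_neg_cancel, Complex.exp_zero, mul_one]
    simp only [hf, this, Complex.ofReal_re]
    exact hr
  have hfnonneg : ∀ X : P, 0 ≤ f X := by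
    intro X
    by_cases hX : IsZero X
    · simp [hf, hv0 X hX]
    · exact (hfpos X hX).le
  -- `f` equals `Complex.abs (Z (v X))` on nonzero objects
  have hfabs : ∀ X : P, ¬ IsZero X → ‖Z (v X)‖ = f X := by
    intro X hX
    obtain ⟨r, hr, hZr⟩ := hZ X hX
    have h1 : Z (v X) * e = (r : ℂ) := by
      rw [hZr, he, mul_assoc, ← Complex.exp_add, add_neg_cancel, Complex.exp_zero, mul_one]
    have h2 : f X = r := by simp only [hf]; rw [h1, Complex.ofReal_re]
    rw [h2, hZr, norm_mul, Complex.norm_exp]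
    simp [abs_of_pos hr]
  -- additivity of `f` on short exact sequences
  have hfadd : ∀ S : ShortComplex P, S.ShortExact → f S.X₂ = f S.X₁ + f S.X₃ := by
    intro S hS
    simp only [hf, hadd S hS, map_add, add_mul, Complex.add_re]
  intro E
  -- f of a subobject is at most f E
  have hfle : ∀ A : Subobject E, f (A : P) ≤ f E := by
    intro A
    have hS := shortExact_of_mono (P := P) A.arrow
    have := hfadd _ hS
    simp only at this
    rw [this]
    exact le_add_of_nonneg_right (hfnonneg _)
  -- f is strictly monotone on subobjects
  have hmono : ∀ A B : Subobject E, A < B → f (A : P) < f (B : P) := by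
    intro A B hAB
    have hS := shortExact_of_mono (P := P) (Subobject.ofLE A B hAB.le)
    have hadd' := hfadd _ hS
    simp only at hadd'
    rw [hadd']
    have hcoker : ¬ IsZero (cokernel (Subobject.ofLE A B hAB.le)) := by
      intro hz
      have : Epi (Subobject.ofLE A B hAB.le) :=
        Preadditive.epi_of_isZero_cokernel _ hz
      have : IsIso (Subobject.ofLE A B hAB.le) := isIso_of_mono_of_epi _
      have hle : B ≤ A := Subobject.le_of_comm (inv (Subobject.ofLE A B hAB.le)) (by
        rw [IsIso.inv_comp_eq, Subobject.ofLE_arrow])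
      exact hAB.not_ge hle
    linarith [hfpos _ hcoker]
  -- the set of classes of subobjects is finite
  have hNclosed : IsClosed (N : Set V) := AddSubgroup.isClosed_of_discrete
  have hcomp : IsCompact ((N : Set V) ∩ Metric.closedBall 0 (C * f E)) :=
    (isCompact_closedBall 0 (C * f E)).inter_left hNclosed
  have hdisc : DiscreteTopology ((N : Set V) ∩ Metric.closedBall 0 (C * f E) : Set V) := by
    exact DiscreteTopology.of_subset (inferInstance : DiscreteTopology (N : Set V)) Set.inter_subset_left
  have hfin : ((N : Set V) ∩ Metric.closedBall 0 (C * f E)).Finite := hcomp.finite (isDiscrete_iff_discreteTopology.mpr hdisc)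
  -- its image in ℝ under n ↦ (Z n * e).re
  set g : V → ℝ := fun x => if h : x ∈ N then (Z ⟨x, h⟩ * e).re else 0 with hg
  set T : Set ℝ := g '' ((N : Set V) ∩ Metric.closedBall 0 (C * f E)) with hT
  have hTfin : T.Finite := hfin.image g
  haveI : Finite T := hTfin.to_subtype
  haveI : WellFoundedLT T := Finite.to_wellFoundedLT
  haveI : WellFoundedGT T := Finite.to_wellFoundedGT
  -- the strictly monotone map
  have hmem : ∀ A : Subobject E, f (A : P) ∈ T := by
    intro A
    refine ⟨(v (A : P) : V), ⟨(v (A : P)).2, ?_⟩, ?_⟩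
    · rw [Metric.mem_closedBall, dist_zero_right]
      by_cases hA : IsZero (A : P)
      · rw [hv0 _ hA]
        simpa using mul_nonneg hC.le (hfnonneg E)
      · calc ‖((v (A : P)) : V)‖ ≤ C * ‖Z (v (A : P))‖ := hsupp _ hA
          _ = C * f (A : P) := by rw [hfabs _ hA]
          _ ≤ C * f E := by
              exact mul_le_mul_of_nonneg_left (hfle A) hC.le
    · simp only [hg, hf, dif_pos (v (A : P)).2, Subtype.coe_eta]
  set h : Subobject E → T := fun A => ⟨f (A : P), hmem A⟩ with hh
  have hsm : StrictMono h := by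
    intro A B hAB
    exact Subtype.mk_lt_mk.mpr (hmono A B hAB)
  exact ⟨hsm.wellFoundedGT, hsm.wellFoundedLT⟩
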